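/- Let K be a centrally symmetric convex body in ℝⁿ, and let q₁, q₂, q₃ ∈ ∂K be such that the closed polygon q₁q₂q₃ has K-length strictly less than 4. Then 0 does not lie in the convex hull of any choice of outer normals to K at q₁, q₂, q₃ (i.e. for any supporting functionals u_i of K at q_i, 0 ∉ conv{u₁, u₂, u₃}). -/
import Mathlib


open scoped RealInnerProductSpace

open Set
open scoped Topology

set_option maxHeartbeats 2000000 in
/-- Purely arithmetic core lemma. -/
lemma tri_arith (l1 l2 l3 s12 s21 s13 s31 s23 s32 a b c : ℝ)
    (hl1 : 0 ≤ l1) (hl2 : 0 ≤ l2) (hl3 : 0 ≤ l3) (hsum : l1 + l2 + l3 = 1)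
    (hb12 : -1 ≤ s12) (hb21 : -1 ≤ s21) (hb13 : -1 ≤ s13) (hb31 : -1 ≤ s31)
    (hb23 : -1 ≤ s23) (hb32 : -1 ≤ s32)
    (I1 : l1 + l2*s21 + l3*s31 = 0) (I2 : l1*s12 + l2 + l3*s32 = 0)
    (I3 : l1*s13 + l2*s23 + l3 = 0)
    (ha1 : 1 - s12 ≤ a) (ha2 : 1 - s21 ≤ a) (hbb1 : 1 - s23 ≤ b) (hbb2 : 1 - s32 ≤ b)
    (hc1 : 1 - s13 ≤ c) (hc2 : 1 - s31 ≤ c) : 4 ≤ a + b + c := by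
  rcases hl1.eq_or_lt with h1 | h1
  · -- l1 = 0
    rcases h1.symm with rfl
    have k1 : l2 ≤ l3 := by
      nlinarith [mul_nonneg hl3 (by linarith : (0:ℝ) ≤ 1 + s32)]
    have k2 : l3 ≤ l2 := by
      nlinarith [mul_nonneg hl2 (by linarith : (0:ℝ) ≤ 1 + s23)]
    have hl2v : l2 = 1/2 := by linarith
    have hl3v : l3 = 1/2 := by linarith
    subst hl2v; subst hl3v
    linarith
  rcases hl2.eq_or_lt with h2 | h2
  · -- l2 = 0
    rcases h2.symm with rfl
    have k1 : l1 ≤ l3 := by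
      nlinarith [mul_nonneg hl3 (by linarith : (0:ℝ) ≤ 1 + s31)]
    have k2 : l3 ≤ l1 := by
      nlinarith [mul_nonneg hl1 (by linarith : (0:ℝ) ≤ 1 + s13)]
    have hl1v : l1 = 1/2 := by linarith
    have hl3v : l3 = 1/2 := by linarith
    subst hl1v; subst hl3v
    linarith
  rcases hl3.eq_or_lt with h3 | h3
  · -- l3 = 0
    rcases h3.symm with rfl
    have k1 : l1 ≤ l2 := by
      nlinarith [mul_nonneg hl2 (by linarith : (0:ℝ) ≤ 1 + s21)]
    have k2 : l2 ≤ l1 := by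
      nlinarith [mul_nonneg hl1 (by linarith : (0:ℝ) ≤ 1 + s12)]
    have hl1v : l1 = 1/2 := by linarith
    have hl2v : l2 = 1/2 := by linarith
    subst hl1v; subst hl2v
    linarith
  -- all positive
  have hd1 : 0 ≤ l2 + l3 - l1 := by
    nlinarith [mul_nonneg hl2 (by linarith : (0:ℝ) ≤ 1 + s21),
      mul_nonneg hl3 (by linarith : (0:ℝ) ≤ 1 + s31)]
  have hd2 : 0 ≤ l1 + l3 - l2 := by
    nlinarith [mul_nonneg hl1 (by linarith : (0:ℝ) ≤ 1 + s12),
      mul_nonneg hl3 (by linarith : (0:ℝ) ≤ 1 + s32)]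
  have hd3 : 0 ≤ l1 + l2 - l3 := by
    nlinarith [mul_nonneg hl1 (by linarith : (0:ℝ) ≤ 1 + s13),
      mul_nonneg hl2 (by linarith : (0:ℝ) ≤ 1 + s23)]
  have P12 : 0 ≤ (l1*l2*(l1+l3-l2)) * (a - 1 + s12) :=
    mul_nonneg (mul_nonneg (mul_nonneg hl1 hl2) hd2) (by linarith)
  have P21 : 0 ≤ (l2*l1*(l2+l3-l1)) * (a - 1 + s21) :=
    mul_nonneg (mul_nonneg (mul_nonneg hl2 hl1) hd1) (by linarith)
  have P23 : 0 ≤ (l2*l3*(l1+l2-l3)) * (b - 1 + s23) :=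
    mul_nonneg (mul_nonneg (mul_nonneg hl2 hl3) hd3) (by linarith)
  have P32 : 0 ≤ (l3*l2*(l1+l3-l2)) * (b - 1 + s32) :=
    mul_nonneg (mul_nonneg (mul_nonneg hl3 hl2) hd2) (by linarith)
  have P13 : 0 ≤ (l1*l3*(l1+l2-l3)) * (c - 1 + s13) :=
    mul_nonneg (mul_nonneg (mul_nonneg hl1 hl3) hd3) (by linarith)
  have P31 : 0 ≤ (l3*l1*(l2+l3-l1)) * (c - 1 + s31) :=
    mul_nonneg (mul_nonneg (mul_nonneg hl3 hl1) hd1) (by linarith)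
  have E1 : (l1*(l2+l3-l1)) * (l1 + l2*s21 + l3*s31) = 0 := by rw [I1, mul_zero]
  have E2 : (l2*(l1+l3-l2)) * (l1*s12 + l2 + l3*s32) = 0 := by rw [I2, mul_zero]
  have E3 : (l3*(l1+l2-l3)) * (l1*s13 + l2*s23 + l3) = 0 := by rw [I3, mul_zero]
  have key : (l2+l3-l1)*((l1+l3-l2)*(l1+l2-l3))
      ≤ 2*(l1*(l2*l3))*(a+b+c) - 8*(l1*(l2*l3)) := by
    linarith [P12, P21, P23, P32, P13, P31, E1, E2, E3]
  have Dprod : 0 ≤ (l2+l3-l1)*((l1+l3-l2)*(l1+l2-l3)) :=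
    mul_nonneg hd1 (mul_nonneg hd2 hd3)
  nlinarith [key, Dprod, mul_pos (mul_pos h1 h2) h3]

lemma inner_le_gauge' {n : ℕ} (K : Set (EuclideanSpace ℝ (Fin n)))
    (habs : Absorbent ℝ K) (u x : EuclideanSpace ℝ (Fin n))
    (hu : ∀ y ∈ K, ⟪u, y⟫ ≤ 1) : ⟪u, x⟫ ≤ gauge K x := by
  refine le_csInf habs.gauge_set_nonempty ?_
  rintro r ⟨hr, y, hy, rfl⟩
  calc ⟪u, r • y⟫ = r * ⟪u, y⟫ := real_inner_smul_right u y r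
    _ ≤ r * 1 := by
        exact mul_le_mul_of_nonneg_left (hu y hy) hr.le
    _ = r := mul_one r

/-- If `q₁, q₂, q₃` are boundary points of a centrally symmetric convex body `K` such
that the closed triangle `q₁ q₂ q₃` has `K`-length strictly less than `4`, then for any
outer normals (supporting functionals) `u₁, u₂, u₃` of `K` at these points, `0` does not
lie in `conv{u₁, u₂, u₃}`. -/
theorem stmt16 {n : ℕ} (K : Set (EuclideanSpace ℝ (Fin n)))
    (hKconv : Convex ℝ K) (hKcpt : IsCompact K) (hK0 : (0 : EuclideanSpace ℝ (Fin n)) ∈ interior K)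
    (hKsymm : K = -K)
    (q₁ q₂ q₃ : EuclideanSpace ℝ (Fin n))
    (hq₁ : gauge K q₁ = 1) (hq₂ : gauge K q₂ = 1) (hq₃ : gauge K q₃ = 1)
    (hlen : gauge K (q₂ - q₁) + gauge K (q₃ - q₂) + gauge K (q₁ - q₃) < 4)
    (u₁ u₂ u₃ : EuclideanSpace ℝ (Fin n))
    (hu₁ : ⟪u₁, q₁⟫ = 1 ∧ ∀ y ∈ K, ⟪u₁, y⟫ ≤ 1)
    (hu₂ : ⟪u₂, q₂⟫ = 1 ∧ ∀ y ∈ K, ⟪u₂, y⟫ ≤ 1)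
    (hu₃ : ⟪u₃, q₃⟫ = 1 ∧ ∀ y ∈ K, ⟪u₃, y⟫ ≤ 1) :
    (0 : EuclideanSpace ℝ (Fin n)) ∉ convexHull ℝ {u₁, u₂, u₃} := by
  intro h0
  have hKnhds : K ∈ 𝓝 (0 : EuclideanSpace ℝ (Fin n)) := mem_interior_iff_mem_nhds.1 hK0
  have habs : Absorbent ℝ K := absorbent_nhds_zero hKnhds
  have hsymm : ∀ x ∈ K, -x ∈ K := by
    intro x hx
    rw [hKsymm]
    exact Set.neg_mem_neg.mpr hx
  -- membership of the qᵢ and their negatives in K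
  have memK : ∀ q : EuclideanSpace ℝ (Fin n), gauge K q = 1 → q ∈ K := by
    intro q hq
    have : q ∈ closure K := (gauge_le_one_iff_mem_closure hKconv hKnhds).1 hq.le
    rwa [hKcpt.isClosed.closure_eq] at this
  have hq₁K := memK q₁ hq₁
  have hq₂K := memK q₂ hq₂
  have hq₃K := memK q₃ hq₃
  -- scalar products bounded
  have sbound : ∀ u q : EuclideanSpace ℝ (Fin n), (∀ y ∈ K, ⟪u, y⟫ ≤ 1) → q ∈ K →
      -1 ≤ ⟪u, q⟫ := by
    intro u q hu hq
    have := hu (-q) (hsymm q hq)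
    rw [inner_neg_right] at this
    linarith
  -- edge bounds
  have edge : ∀ u p q : EuclideanSpace ℝ (Fin n), (∀ y ∈ K, ⟪u, y⟫ ≤ 1) →
      ⟪u, p⟫ - ⟪u, q⟫ ≤ gauge K (q - p) := by
    intro u p q hu
    have h1 : ⟪u, p - q⟫ ≤ gauge K (p - q) := inner_le_gauge' K habs u _ hu
    rw [inner_sub_right] at h1
    have h2 : gauge K (p - q) = gauge K (q - p) := by
      rw [show p - q = -(q - p) by abel, gauge_neg hsymm]
    linarith [h1, h2.le]
  -- decompose the convex combination
  have hins : ({u₁, u₂, u₃} : Set (EuclideanSpace ℝ (Fin n)))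
      = insert u₁ {u₂, u₃} := rfl
  rw [hins, convexHull_insert ⟨u₂, Or.inl rfl⟩] at h0
  obtain ⟨z, hz, h0seg⟩ := Set.mem_iUnion₂.1 h0
  rw [Set.mem_singleton_iff] at hz
  rw [hz] at h0seg
  obtain ⟨y, hy, h0seg'⟩ := Set.mem_iUnion₂.1 h0seg
  rw [convexHull_pair] at hy
  obtain ⟨t, t', ht, ht', htt, hz'⟩ := hy
  obtain ⟨p, p', hp, hp', hpp, h0'⟩ := h0seg'
  set l1 := p with hl1def
  set l2 := p' * t with hl2def
  set l3 := p' * t' with hl3def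
  have hcomb : l1 • u₁ + l2 • u₂ + l3 • u₃ = 0 := by
    rw [← h0', ← hz']
    rw [smul_add, smul_smul, smul_smul]
    abel
  have hsum : l1 + l2 + l3 = 1 := by
    simp only [hl1def, hl2def, hl3def]
    linear_combination p' * htt + hpp
  have hl2 : 0 ≤ l2 := mul_nonneg hp' ht
  have hl3 : 0 ≤ l3 := mul_nonneg hp' ht'
  -- identities
  have ident : ∀ q : EuclideanSpace ℝ (Fin n),
      l1 * ⟪u₁, q⟫ + l2 * ⟪u₂, q⟫ + l3 * ⟪u₃, q⟫ = 0 := by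
    intro q
    have : ⟪l1 • u₁ + l2 • u₂ + l3 • u₃, q⟫ = (0 : ℝ) := by
      rw [hcomb, inner_zero_left]
    rwa [inner_add_left, inner_add_left, real_inner_smul_left, real_inner_smul_left,
      real_inner_smul_left] at this
  have I1 := ident q₁
  have I2 := ident q₂
  have I3 := ident q₃
  rw [hu₁.1] at I1
  rw [hu₂.1] at I2
  rw [hu₃.1] at I3
  have main := tri_arith l1 l2 l3 ⟪u₁, q₂⟫ ⟪u₂, q₁⟫ ⟪u₁, q₃⟫ ⟪u₃, q₁⟫ ⟪u₂, q₃⟫ ⟪u₃, q₂⟫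
    (gauge K (q₂ - q₁)) (gauge K (q₃ - q₂)) (gauge K (q₁ - q₃))
    hp hl2 hl3 hsum
    (sbound u₁ q₂ hu₁.2 hq₂K) (sbound u₂ q₁ hu₂.2 hq₁K)
    (sbound u₁ q₃ hu₁.2 hq₃K) (sbound u₃ q₁ hu₃.2 hq₁K)
    (sbound u₂ q₃ hu₂.2 hq₃K) (sbound u₃ q₂ hu₃.2 hq₂K)
    (by linarith [I1]) (by linarith [I2]) (by linarith [I3])
    (by have := edge u₁ q₁ q₂ hu₁.2; rw [hu₁.1] at this; linarith)
    (by have := edge u₂ q₂ q₁ hu₂.2; rw [hu₂.1] at this;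
        rw [show gauge K (q₁ - q₂) = gauge K (q₂ - q₁) by
          rw [show q₁ - q₂ = -(q₂ - q₁) by abel, gauge_neg hsymm]] at this; linarith)
    (by have := edge u₂ q₂ q₃ hu₂.2; rw [hu₂.1] at this; linarith)
    (by have := edge u₃ q₃ q₂ hu₃.2; rw [hu₃.1] at this;
        rw [show gauge K (q₂ - q₃) = gauge K (q₃ - q₂) by
          rw [show q₂ - q₃ = -(q₃ - q₂) by abel, gauge_neg hsymm]] at this; linarith)
    (by have := edge u₁ q₁ q₃ hu₁.2; rw [hu₁.1] at this;
        rw [show gauge K (q₃ - q₁) = gauge K (q₁ - q₃) by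
          rw [show q₃ - q₁ = -(q₁ - q₃) by abel, gauge_neg hsymm]] at this; linarith)
    (by have := edge u₃ q₃ q₁ hu₃.2; rw [hu₃.1] at this; linarith)
  linarith
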